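/- Let W be a random variable with values in [δ, 1−δ] for some 0 < δ < 1/2, whose distribution is symmetric in the sense W =ᵈ 1−W, and let T ∈ {0,1} with P(T = 1 | W) = W. Set Z := |W − 1/2|. Then P(T = 1 | Z) = 1/2 almost surely, and consequently T is independent of Z. -/

import Mathlib

open MeasureTheory ProbabilityTheory

/-- Symmetric example: `W ∈ [δ, 1−δ]` with `W =ᵈ 1−W`, `T ∈ {0,1}` with `P(T=1|W) = W`,
and `Z := |W − 1/2|`. Then `P(T=1|Z) = 1/2` a.s., and `T` is independent of `Z`. -/
theorem stmt_8 {Ω : Type*} [m0 : MeasurableSpace Ω]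
    (μ : Measure Ω) [IsProbabilityMeasure μ]
    (δ : ℝ) (hδ0 : 0 < δ) (hδ : δ < 1 / 2)
    (W T Z : Ω → ℝ) (hW : Measurable W) (hT : Measurable T)
    (hWrange : ∀ ω, W ω ∈ Set.Icc δ (1 - δ))
    (hsym : Measure.map W μ = Measure.map (fun ω => 1 - W ω) μ)
    (hTbin : ∀ ω, T ω = 0 ∨ T ω = 1)
    (hprop : (μ[Set.indicator {ω | T ω = 1} (fun _ => (1 : ℝ))
        | MeasurableSpace.comap W inferInstance]) =ᵐ[μ] W)
    (hZ : Z = fun ω => |W ω - 1 / 2|) :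
    ((μ[Set.indicator {ω | T ω = 1} (fun _ => (1 : ℝ))
        | MeasurableSpace.comap Z inferInstance]) =ᵐ[μ] fun _ => (1 / 2 : ℝ)) ∧
    IndepFun T Z μ := by
  subst hZ
  set f : Ω → ℝ := Set.indicator {ω | T ω = 1} (fun _ => (1 : ℝ)) with hfdef
  have hE : MeasurableSet {ω | T ω = 1} := hT (measurableSet_singleton 1)
  have hZm : Measurable (fun ω => |W ω - 1 / 2|) := (hW.sub measurable_const).abs
  have hm : MeasurableSpace.comap (fun ω => |W ω - 1 / 2|) inferInstance ≤ m0 :=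
    hZm.comap_le
  have hmW : MeasurableSpace.comap W inferInstance ≤ m0 := hW.comap_le
  have hfint : Integrable f μ := (integrable_const (1 : ℝ)).indicator hE
  have hWint : Integrable W μ := by
    refine (integrable_const (1 : ℝ)).mono' hW.aestronglyMeasurable ?_
    filter_upwards with ω
    have h1 := (hWrange ω).1
    have h2 := (hWrange ω).2
    rw [Real.norm_eq_abs, abs_le]
    constructor <;> linarith
  -- the key integral computation
  have keyI : ∀ t : Set ℝ, MeasurableSet t →
      ∫ x in (fun ω => |W ω - 1 / 2|) ⁻¹' t, f x ∂μ
        = (μ ((fun ω => |W ω - 1 / 2|) ⁻¹' t)).toReal / 2 := by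
    intro t ht
    set h : ℝ → ℝ := fun w => |w - 1 / 2| with hh
    have hhm : Measurable h := (measurable_id.sub measurable_const).abs
    set S : Set ℝ := h ⁻¹' t with hSdef
    have hSm : MeasurableSet S := hhm ht
    have hpre : (fun ω => |W ω - 1 / 2|) ⁻¹' t = W ⁻¹' S := rfl
    have hWSm : MeasurableSet (W ⁻¹' S) := hW hSm
    have hSsym : (fun w : ℝ => 1 - w) ⁻¹' S = S := by
      ext w
      simp only [Set.mem_preimage, hSdef, hh]
      rw [show (1 : ℝ) - w - 1 / 2 = -(w - 1 / 2) by ring, abs_neg]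
    have h1 : ∫ x in W ⁻¹' S, W x ∂μ = ∫ x in W ⁻¹' S, (1 - W x) ∂μ := by
      have e1 : ∫ x in W ⁻¹' S, W x ∂μ = ∫ y in S, y ∂(Measure.map W μ) :=
        (setIntegral_map hSm aestronglyMeasurable_id hW.aemeasurable).symm
      have e2 : ∫ y in S, y ∂(Measure.map (fun ω => 1 - W ω) μ)
          = ∫ x in (fun ω => 1 - W ω) ⁻¹' S, (1 - W x) ∂μ :=
        setIntegral_map hSm aestronglyMeasurable_id (measurable_const.sub hW).aemeasurable
      have e3 : (fun ω => 1 - W ω) ⁻¹' S = W ⁻¹' S := by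
        rw [show (fun ω => 1 - W ω) = (fun w : ℝ => 1 - w) ∘ W from rfl,
          Set.preimage_comp, hSsym]
      rw [e1, hsym, e2, e3]
    have h2 : ∫ x in W ⁻¹' S, (1 - W x) ∂μ
        = (μ (W ⁻¹' S)).toReal - ∫ x in W ⁻¹' S, W x ∂μ := by
      rw [integral_sub (integrable_const 1).integrableOn hWint.integrableOn,
        setIntegral_const]
      simp
      rfl
    have hIntW : ∫ x in W ⁻¹' S, W x ∂μ = (μ (W ⁻¹' S)).toReal / 2 := by
      rw [h2] at h1; linarith
    have hsmem : MeasurableSet[MeasurableSpace.comap W inferInstance] (W ⁻¹' S) :=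
      ⟨S, hSm, rfl⟩
    have h3 : ∫ x in W ⁻¹' S, f x ∂μ = ∫ x in W ⁻¹' S, W x ∂μ :=
      (setIntegral_condExp hmW hfint hsmem).symm.trans
        (setIntegral_congr_ae hWSm (hprop.mono fun x hx _ => hx))
    rw [hpre, h3, hIntW]
  have h4 : ∀ A : Set Ω, MeasurableSet A →
      ∫ x in A, f x ∂μ = (μ ({ω | T ω = 1} ∩ A)).toReal := by
    intro A hA
    rw [hfdef, setIntegral_indicator hE, setIntegral_const, Set.inter_comm]
    simp
    rfl
  have key2 : ∀ t : Set ℝ, MeasurableSet t →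
      (μ ({ω | T ω = 1} ∩ (fun ω => |W ω - 1 / 2|) ⁻¹' t)).toReal
        = (μ ((fun ω => |W ω - 1 / 2|) ⁻¹' t)).toReal / 2 := by
    intro t ht
    rw [← h4 _ (hZm ht), keyI t ht]
  -- partition fact
  have hsplit : ∀ A : Set Ω, MeasurableSet A →
      μ ({ω | T ω = 1} ∩ A) + μ ({ω | T ω = 0} ∩ A) = μ A := by
    intro A hA
    have hE0 : MeasurableSet {ω | T ω = 0} := hT (measurableSet_singleton 0)
    rw [← measure_union ?_ (hE0.inter hA)]
    · congr 1
      ext ω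
      rcases hTbin ω with h | h <;>
        simp [Set.mem_inter_iff, Set.mem_union, h]
    · refine Set.disjoint_left.2 fun ω h1 h0 => ?_
      have : T ω = 1 := h1.1
      have : T ω = 0 := h0.1
      simp_all
  have key3 : ∀ t : Set ℝ, MeasurableSet t →
      (μ ({ω | T ω = 0} ∩ (fun ω => |W ω - 1 / 2|) ⁻¹' t)).toReal
        = (μ ((fun ω => |W ω - 1 / 2|) ⁻¹' t)).toReal / 2 := by
    intro t ht
    have hA : MeasurableSet ((fun ω => |W ω - 1 / 2|) ⁻¹' t) := hZm ht
    have hs := hsplit _ hA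
    have h2 := key2 t ht
    have := congrArg ENNReal.toReal hs
    rw [ENNReal.toReal_add (measure_ne_top μ _) (measure_ne_top μ _)] at this
    linarith
  constructor
  · -- conditional expectation part
    refine (ae_eq_condExp_of_forall_setIntegral_eq hm hfint
      (fun s _ _ => (integrable_const _).integrableOn)
      (fun s hs _ => ?_)
      (stronglyMeasurable_const.aestronglyMeasurable )).symm
    obtain ⟨t, ht, rfl⟩ := hs
    rw [setIntegral_const, keyI t ht, smul_eq_mul, measureReal_def]
    ring
  · -- independence part
    rw [indepFun_iff_measure_inter_preimage_eq_mul]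
    intro s t hs ht
    set A := (fun ω => |W ω - 1 / 2|) ⁻¹' t with hA
    have hAm : MeasurableSet A := hZm ht
    have hAfin : μ A ≠ ⊤ := measure_ne_top μ _
    have huniv1 : (μ {ω | T ω = 1}).toReal = 1 / 2 := by
      have := key2 Set.univ MeasurableSet.univ
      simpa using this
    have huniv0 : (μ {ω | T ω = 0}).toReal = 1 / 2 := by
      have := key3 Set.univ MeasurableSet.univ
      simpa using this
    -- identify T ⁻¹' s
    by_cases h1 : (1 : ℝ) ∈ s <;> by_cases h0 : (0 : ℝ) ∈ s
    · have hTs : T ⁻¹' s = Set.univ := by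
        ext ω; rcases hTbin ω with h | h <;> simp [Set.mem_preimage, h, h0, h1]
      rw [hTs]
      simp
    · have hTs : T ⁻¹' s = {ω | T ω = 1} := by
        ext ω; rcases hTbin ω with h | h <;> simp [Set.mem_preimage, h, h0, h1]
      rw [hTs]
      refine (ENNReal.toReal_eq_toReal_iff' (measure_ne_top μ _)
        (ENNReal.mul_ne_top (measure_ne_top μ _) hAfin)).1 ?_
      rw [ENNReal.toReal_mul, key2 t ht, huniv1]
      ring
    · have hTs : T ⁻¹' s = {ω | T ω = 0} := by
        ext ω; rcases hTbin ω with h | h <;> simp [Set.mem_preimage, h, h0, h1]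
      rw [hTs]
      refine (ENNReal.toReal_eq_toReal_iff' (measure_ne_top μ _)
        (ENNReal.mul_ne_top (measure_ne_top μ _) hAfin)).1 ?_
      rw [ENNReal.toReal_mul, key3 t ht, huniv0]
      ring
    · have hTs : T ⁻¹' s = ∅ := by
        ext ω; rcases hTbin ω with h | h <;> simp [Set.mem_preimage, h, h0, h1]
      rw [hTs]
      simp
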